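/- Let X be a real 3×3 positive definite matrix satisfying Xᵀ · I_{2,1} · X = I_{2,1} and det X = 1 (i.e. X is a positive definite element of SO⁺(2,1)). Then there exists a positive definite real 2×2 matrix Y with det Y = 1 such that Φ₂₁(Y) = X. -/

import Mathlib

open Matrix

/-- The covering map `Φ₂₁ : SL(2,ℝ) → SO⁺(2,1)`, written out entrywise. -/
noncomputable def Phi21 (Y : Matrix (Fin 2) (Fin 2) ℝ) : Matrix (Fin 3) (Fin 3) ℝ :=
  let y₁ := Y 0 0
  let y₂ := Y 0 1
  let y₃ := Y 1 0
  let y₄ := Y 1 1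
  !![1 + 2*y₂*y₃, y₂*y₄ - y₁*y₃, -(y₁*y₃ + y₂*y₄);
     y₃*y₄ - y₁*y₂, (y₁^2 - y₂^2 - y₃^2 + y₄^2)/2, (y₁^2 + y₂^2 - y₃^2 - y₄^2)/2;
     -(y₁*y₂ + y₃*y₄), (y₁^2 - y₂^2 + y₃^2 - y₄^2)/2, (y₁^2 + y₂^2 + y₃^2 + y₄^2)/2]

/-- The indefinite form matrix `I_{2,1} = diag(1,1,−1)`. -/
def I21 : Matrix (Fin 3) (Fin 3) ℝ := Matrix.diagonal ![1, 1, -1]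

set_option maxHeartbeats 1000000 in
theorem stmt_8 (X : Matrix (Fin 3) (Fin 3) ℝ) (hpos : X.PosDef)
    (hso : Xᵀ * I21 * X = I21) (hdet : X.det = 1) :
    ∃ Y : Matrix (Fin 2) (Fin 2) ℝ, Y.PosDef ∧ Y.det = 1 ∧ Phi21 Y = X := by
  have hsym : ∀ i j, X j i = X i j := fun i j => by
    have := congrFun (congrFun hpos.1 i) j
    simpa [conjTranspose_apply] using this
  have hI : I21 * I21 = 1 := by
    simp [I21, Matrix.diagonal_mul_diagonal]
    ext i
    fin_cases i <;> simp [Matrix.one_apply]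
  have hleft : (I21 * Xᵀ * I21) * X = 1 := by
    calc (I21 * Xᵀ * I21) * X = I21 * (Xᵀ * I21 * X) := by simp only [Matrix.mul_assoc]
    _ = 1 := by rw [hso, hI]
  have hright : X * (I21 * Xᵀ * I21) = 1 := mul_eq_one_comm.mp hleft
  have hadj : X.adjugate = I21 * Xᵀ * I21 := by
    calc X.adjugate = X.adjugate * (X * (I21 * Xᵀ * I21)) := by rw [hright, Matrix.mul_one]
    _ = (X.adjugate * X) * (I21 * Xᵀ * I21) := by simp only [Matrix.mul_assoc]
    _ = I21 * Xᵀ * I21 := by rw [Matrix.adjugate_mul, hdet, one_smul, Matrix.one_mul]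
  -- scalar identities from the adjugate relation
  have e1 : X 1 1 * X 2 2 - X 1 2 * X 1 2 = X 0 0 := by
    have h := congrFun (congrFun hadj 0) 0
    simp [Matrix.adjugate_fin_three, Matrix.mul_apply, I21, Fin.sum_univ_three] at h
    rw [hsym 1 2] at h; exact h
  have e2 : -(X 0 1 * X 2 2) + X 0 2 * X 1 2 = X 0 1 := by
    have h := congrFun (congrFun hadj 0) 1
    simp [Matrix.adjugate_fin_three, Matrix.mul_apply, I21, Fin.sum_univ_three] at h
    rw [hsym 1 2, hsym 0 1] at h; exact h
  have e4 : X 0 0 * X 2 2 - X 0 2 * X 0 2 = X 1 1 := by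
    have h := congrFun (congrFun hadj 1) 1
    simp [Matrix.adjugate_fin_three, Matrix.mul_apply, I21, Fin.sum_univ_three] at h
    rw [hsym 0 2] at h; exact h
  have e6 : X 0 0 * X 1 1 - X 0 1 * X 0 1 = X 2 2 := by
    have h := congrFun (congrFun hadj 2) 2
    simp [Matrix.adjugate_fin_three, Matrix.mul_apply, I21, Fin.sum_univ_three] at h
    rw [hsym 0 1] at h; exact h
  -- scalar identities from the orthogonality relation
  have g1 : X 0 0 * X 0 0 + X 0 1 * X 0 1 - X 0 2 * X 0 2 = 1 := by
    have h := congrFun (congrFun hso 0) 0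
    simp [Matrix.mul_apply, I21, Fin.sum_univ_three] at h
    rw [hsym 0 1, hsym 0 2] at h; linarith
  have g2 : X 0 0 * X 0 1 + X 0 1 * X 1 1 - X 0 2 * X 1 2 = 0 := by
    have h := congrFun (congrFun hso 0) 1
    simp [Matrix.mul_apply, I21, Fin.sum_univ_three] at h
    rw [hsym 0 1, hsym 0 2, hsym 1 2] at h; linarith
  have g4 : X 0 1 * X 0 1 + X 1 1 * X 1 1 - X 1 2 * X 1 2 = 1 := by
    have h := congrFun (congrFun hso 1) 1
    simp [Matrix.mul_apply, I21, Fin.sum_univ_three] at h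
    rw [hsym 1 2] at h; linarith
  have g6 : X 0 2 * X 0 2 + X 1 2 * X 1 2 - X 2 2 * X 2 2 = -1 := by
    have h := congrFun (congrFun hso 2) 2
    simp [Matrix.mul_apply, I21, Fin.sum_univ_three] at h
    linarith
  -- positivity facts
  have p0 : 0 < X 0 0 := by
    have h := hpos.dotProduct_mulVec_pos (x := ![1,0,0]) (by intro h; simpa using congrFun h 0)
    simpa [dotProduct, Matrix.mulVec, Fin.sum_univ_three] using h
  have p2 : 0 < X 2 2 := by
    have h := hpos.dotProduct_mulVec_pos (x := ![0,0,1]) (by intro h; simpa using congrFun h 2)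
    simpa [dotProduct, Matrix.mulVec, Fin.sum_univ_three] using h
  have pa : 0 < X 1 1 + X 1 2 + (X 1 2 + X 2 2) := by
    have h := hpos.dotProduct_mulVec_pos (x := ![0,1,1]) (by intro h; simpa using congrFun h 1)
    simp [dotProduct, Matrix.mulVec, Fin.sum_univ_three] at h
    rw [hsym 1 2] at h; linarith
  have pd : 0 < X 1 1 - X 1 2 - X 1 2 + X 2 2 := by
    have h := hpos.dotProduct_mulVec_pos (x := ![0,1,-1]) (by intro h; simpa using congrFun h 1)
    simp [dotProduct, Matrix.mulVec, Fin.sum_univ_three] at h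
    rw [hsym 1 2] at h; linarith
  -- derived polynomial identities
  have hT1 : (X 0 0 - 1) * (X 0 0 + X 1 1 + X 2 2 + 1) = 2 * (X 0 2 * X 0 2) := by
    linear_combination e4 + e6 + g1
  have hT1' : (X 1 1 - 1) * (X 0 0 + X 1 1 + X 2 2 + 1) = 2 * (X 1 2 * X 1 2) := by
    linear_combination e1 + e6 + g4
  have hT2 : X 0 1 * (X 0 0 + X 1 1 + X 2 2 + 1) = 2 * (X 0 2 * X 1 2) := by
    linear_combination g2 - e2
  have hf0 : (X 2 2 - 1) * (X 0 0 + X 1 1 - X 2 2 - 1) = 0 := by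
    linear_combination e1 + e4 + g6
  have hf : X 0 0 + X 1 1 = X 2 2 + 1 := by
    rcases mul_eq_zero.mp hf0 with h | h
    · have h22 : X 2 2 = 1 := by linarith
      have hsum : X 0 2 * X 0 2 + X 1 2 * X 1 2 = 0 := by
        linear_combination g6 + (X 2 2 + 1) * h
      have h02 : X 0 2 = 0 := by
        have h2 : X 0 2 * X 0 2 = 0 :=
          le_antisymm (by nlinarith [mul_self_nonneg (X 1 2)]) (mul_self_nonneg _)
        exact mul_self_eq_zero.mp h2
      have h12 : X 1 2 = 0 := by
        have h2 : X 1 2 * X 1 2 = 0 :=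
          le_antisymm (by nlinarith [mul_self_nonneg (X 0 2)]) (mul_self_nonneg _)
        exact mul_self_eq_zero.mp h2
      have h11 : X 1 1 = X 0 0 := by rw [h22, h12] at e1; linarith
      have h01 : X 0 1 = 0 := by
        rw [h11] at e6; rw [h02] at g1
        have h2 : X 0 1 * X 0 1 = 0 := by linarith
        exact mul_self_eq_zero.mp h2
      have h00 : X 0 0 = 1 := by
        rw [h02, h01] at g1
        have h2 : (X 0 0 - 1) * (X 0 0 + 1) = 0 := by linear_combination g1
        rcases mul_eq_zero.mp h2 with h3 | h3
        · linarith
        · linarith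
      rw [h22, h11, h00]
    · linarith
  -- the square root
  set s : ℝ := Real.sqrt (2 * (X 2 2 + 1)) with hs_def
  have hs2 : s ^ 2 = 2 * (X 2 2 + 1) := Real.sq_sqrt (by linarith)
  have hs : 0 < s := Real.sqrt_pos.mpr (by linarith)
  have hsne : s ≠ 0 := ne_of_gt hs
  have hapos : 0 < s ^ 2 + 2 * X 1 2 := by rw [hs2]; linarith
  have hdpos : 0 < s ^ 2 - 2 * X 1 2 := by rw [hs2]; linarith
  have key : (s ^ 2 + 2 * X 1 2) * (s ^ 2 - 2 * X 1 2) - 4 * (X 0 2 * X 0 2) = 4 * s ^ 2 := by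
    rw [hs2]; linear_combination (-4 : ℝ) * g6
  obtain ⟨a, ha_def⟩ : ∃ a : ℝ, a = (s^2 + 2*X 1 2)/(2*s) := ⟨_, rfl⟩
  obtain ⟨b, hb_def⟩ : ∃ b : ℝ, b = -(X 0 2)/s := ⟨_, rfl⟩
  obtain ⟨d, hd_def⟩ : ∃ d : ℝ, d = (s^2 - 2*X 1 2)/(2*s) := ⟨_, rfl⟩
  have ha_pos : 0 < a := by rw [ha_def]; positivity
  have hd_pos : 0 < d := by rw [hd_def]; positivity
  have habd : a * d - b * b = 1 := by
    rw [ha_def, hb_def, hd_def]; field_simp; linear_combination key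
  have hsum : a + d = s := by rw [ha_def, hd_def]; field_simp; ring
  have hbb : 2 * (b * b) = X 0 0 - 1 := by
    rw [hb_def]; field_simp
    linear_combination (-1 : ℝ) * hT1 + (X 0 0 - 1) * hf - (X 0 0 - 1) * hs2
  have hbd : b * (d - a) = X 0 1 := by
    rw [hb_def, ha_def, hd_def]; field_simp
    linear_combination (-2 : ℝ) * hT2 + 2 * X 0 1 * hf - 2 * X 0 1 * hs2
  have hbs : -(b * s) = X 0 2 := by rw [hb_def]; field_simp
  have h11f : (a^2 - b^2 - b^2 + d^2)/2 = X 1 1 := by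
    linear_combination ((a + d + s)/2) * hsum - habd - hbb + hs2/2 - hf
  have h22f : (a^2 + b^2 + b^2 + d^2)/2 = X 2 2 := by
    linear_combination ((a + d + s)/2) * hsum - habd + hs2/2
  have had : (a^2 - d^2)/2 = X 1 2 := by
    rw [ha_def, hd_def]; field_simp; ring
  refine ⟨!![a, b; b, d], ?_, ?_, ?_⟩
  · refine Matrix.PosDef.of_dotProduct_mulVec_pos ?_ ?_
    · ext i j
      fin_cases i <;> fin_cases j <;> simp [Matrix.conjTranspose_apply]
    · intro v hv
      have hv' : v 0 ≠ 0 ∨ v 1 ≠ 0 := by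
        by_contra h
        push_neg at h
        exact hv (by ext i; fin_cases i <;> simp [h.1, h.2])
      simp only [star_trivial, dotProduct, Matrix.mulVec, Fin.sum_univ_two,
        Matrix.cons_val', Matrix.cons_val_zero, Matrix.cons_val_one, Matrix.head_cons,
        Matrix.empty_val', Matrix.cons_val_fin_one, Matrix.head_fin_const, Matrix.of_apply]
      have hQ : a * (v 0 * (a * v 0 + b * v 1) + v 1 * (b * v 0 + d * v 1))
          = (a * v 0 + b * v 1)^2 + (v 1)^2 := by
        linear_combination (v 1)^2 * habd
      have hQpos : 0 < a * (v 0 * (a * v 0 + b * v 1) + v 1 * (b * v 0 + d * v 1)) := by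
        rw [hQ]
        rcases eq_or_ne (v 1) 0 with h1 | h1
        · rcases hv' with h0 | h0
          · have : a * v 0 + b * v 1 ≠ 0 := by
              rw [h1]; simpa using mul_ne_zero (ne_of_gt ha_pos) h0
            positivity
          · exact absurd h1 h0
        · positivity
      rcases mul_pos_iff.mp hQpos with ⟨_, hq⟩ | ⟨ha', _⟩
      · exact hq
      · exact absurd ha' (not_lt.mpr ha_pos.le)
  · rw [Matrix.det_fin_two_of]
    linarith [habd]
  · ext i j
    fin_cases i <;> fin_cases j <;> simp [Phi21]
    · linarith [hbb]
    · linear_combination hbd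
    · linear_combination (-b) * hsum + hbs
    · rw [hsym 0 1]; linear_combination hbd
    · linear_combination h11f
    · linear_combination had
    · rw [hsym 0 2]; linear_combination (-b) * hsum + hbs
    · rw [hsym 1 2]; linear_combination had
    · linear_combination h22f
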